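/- Let 0 < ρ < 1 and let (g_n)_{n≥1} be a sequence of complex numbers. Suppose there exists a strictly increasing sequence of positive integers (n_k) such that ρ^{n_{k+1} − n_k} · |g_{n_k}|² / (n_k ρ^{n_k}) → ∞ as k → ∞ (the gap property GP). Then ρ^α · Σ_{1 ≤ n ≤ α} |g_n|²/(n ρ^{2n}) → ∞ as α → ∞ (α ranging over positive reals). -/

import Mathlib

open Filter

/-- The gap property GP implies ρ^α Σ_{1≤n≤α} |g_n|²/(n ρ^{2n}) → ∞ as α → ∞. -/
theorem stmt4 (ρ : ℝ) (hρ : 0 < ρ) (hρ1 : ρ < 1) (g : ℕ → ℂ)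
    (nk : ℕ → ℕ) (hmono : StrictMono nk) (hpos : 1 ≤ nk 0)
    (hGP : Tendsto (fun k : ℕ =>
        ρ ^ (nk (k + 1) - nk k) * ‖g (nk k)‖ ^ 2 /
          (nk k * ρ ^ nk k)) atTop atTop) :
    Tendsto (fun α : ℝ => ρ ^ α * ∑ n ∈ Finset.Icc 1 ⌊α⌋₊,
      ‖g n‖ ^ 2 / (n * ρ ^ (2 * n))) atTop atTop := by
  rw [tendsto_atTop] at hGP ⊢
  intro b
  obtain ⟨K, hK⟩ := eventually_atTop.1 (hGP b)
  filter_upwards [eventually_ge_atTop ((nk K : ℝ))] with α hα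
  have hαfloor : nk K ≤ ⌊α⌋₊ := Nat.le_floor hα
  set N := ⌊α⌋₊ with hN
  set k := Nat.findGreatest (fun j => nk j ≤ N) N with hk
  have hKN : K ≤ N := le_trans hmono.le_apply hαfloor
  have hkspec : nk k ≤ N := Nat.findGreatest_spec (P := fun j => nk j ≤ N) hKN hαfloor
  have hKk : K ≤ k := Nat.le_findGreatest (P := fun j => nk j ≤ N) hKN hαfloor
  have hknext : N < nk (k + 1) := by
    by_cases h : k + 1 ≤ N
    · have h2 := Nat.findGreatest_is_greatest (Nat.lt_succ_self k) h
      simpa using Nat.lt_of_not_le (by simpa using h2)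
    · calc N < k + 1 := by omega
        _ ≤ nk (k + 1) := hmono.le_apply
  have hnkk1 : 1 ≤ nk k := le_trans hpos (hmono.monotone (Nat.zero_le k))
  have hmem : nk k ∈ Finset.Icc 1 N := Finset.mem_Icc.2 ⟨hnkk1, hkspec⟩
  have hterm : ‖g (nk k)‖ ^ 2 / (nk k * ρ ^ (2 * nk k)) ≤
      ∑ n ∈ Finset.Icc 1 N, ‖g n‖ ^ 2 / (n * ρ ^ (2 * n)) :=
    Finset.single_le_sum (f := fun n : ℕ => ‖g n‖ ^ 2 / (n * ρ ^ (2 * n)))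
      (fun i _ => by positivity) hmem
  have hρα : ρ ^ (nk (k + 1)) ≤ ρ ^ α := by
    rw [← Real.rpow_natCast ρ (nk (k + 1))]
    apply Real.rpow_le_rpow_of_exponent_ge hρ hρ1.le
    have h1 : α < (N : ℝ) + 1 := Nat.lt_floor_add_one α
    have h2 : (N : ℝ) + 1 ≤ (nk (k + 1) : ℝ) := by exact_mod_cast hknext
    linarith
  have hmne : (nk k : ℝ) ≠ 0 := by positivity
  have hρne : ρ ≠ 0 := ne_of_gt hρ
  calc b ≤ ρ ^ (nk (k + 1) - nk k) * ‖g (nk k)‖ ^ 2 / (nk k * ρ ^ nk k) :=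
        hK k hKk
    _ = ρ ^ (nk (k + 1)) * (‖g (nk k)‖ ^ 2 / (nk k * ρ ^ (2 * nk k))) := by
        have hd : nk (k + 1) = (nk (k + 1) - nk k) + nk k :=
          (Nat.sub_add_cancel (hmono.monotone (Nat.le_succ k))).symm
        rw [two_mul]
        rw [show ρ ^ (nk (k + 1)) = ρ ^ (nk (k + 1) - nk k) * ρ ^ (nk k) by
          rw [← pow_add, ← hd]]
        rw [pow_add]
        field_simp
    _ ≤ ρ ^ α * (‖g (nk k)‖ ^ 2 / (nk k * ρ ^ (2 * nk k))) := by
        apply mul_le_mul_of_nonneg_right hρα (by positivity)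
    _ ≤ ρ ^ α * ∑ n ∈ Finset.Icc 1 N, ‖g n‖ ^ 2 / (n * ρ ^ (2 * n)) := by
        apply mul_le_mul_of_nonneg_left hterm (Real.rpow_nonneg hρ.le α)
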